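/- Let l be a natural number, let A be a set whose cardinality is strictly greater than 2^l, let P : Fin l → Set A, and let c be a function assigning to every nonempty subset S of A an element c(S) ∈ S. Then there exist a bijection e : A ≃ A such that for every i and every x ∈ A, x ∈ P i ↔ e x ∈ P i, and a nonempty subset S of A such that c(e '' S) ≠ e(c(S)). -/
import Mathlib


/-- If `|A| > 2 ^ l` then no choice function on the nonempty subsets of `A` is invariant
under all permutations preserving `l` given unary predicates. -/
theorem no_invariant_choice_of_large {A : Type*} (l : ℕ)
    (hA : 2 ^ (l : Cardinal) < Cardinal.mk A)
    (P : Fin l → Set A) (c : Set A → A) (hc : ∀ S : Set A, S.Nonempty → c S ∈ S) :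
    ∃ e : A ≃ A, (∀ (i : Fin l) (x : A), x ∈ P i ↔ e x ∈ P i) ∧
      ∃ S : Set A, S.Nonempty ∧ c (e '' S) ≠ e (c S) := by
  classical
  -- the pattern map is not injective
  set f : A → (Fin l → Bool) := fun x i => decide (x ∈ P i) with hf
  have hcard : Cardinal.mk (Fin l → Bool) = 2 ^ (l : Cardinal) := by
    simp [Cardinal.mk_arrow, Cardinal.mk_bool]
  have hninj : ¬ Function.Injective f := by
    intro h
    have h1 := Cardinal.lift_mk_le_lift_mk_of_injective h
    rw [hcard] at h1
    simp only [Cardinal.lift_power, Cardinal.lift_ofNat, Cardinal.lift_natCast,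
      Cardinal.lift_id, Cardinal.lift_uzero] at h1
    exact absurd (h1.trans_lt hA) (lt_irrefl _)
  rw [Function.not_injective_iff] at hninj
  obtain ⟨a, b, hab, hne⟩ := hninj
  have hpat : ∀ i, a ∈ P i ↔ b ∈ P i := by
    intro i
    have := congrFun hab i
    simpa [hf] using this
  refine ⟨Equiv.swap a b, ?_, ?_⟩
  · intro i x
    rcases eq_or_ne x a with rfl | hxa
    · simp [Equiv.swap_apply_left, hpat i]
    rcases eq_or_ne x b with rfl | hxb
    · simp [Equiv.swap_apply_right, hpat i]
    · rw [Equiv.swap_apply_of_ne_of_ne hxa hxb]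
  · refine ⟨{a, b}, ⟨a, by simp⟩, ?_⟩
    have himg : (Equiv.swap a b) '' {a, b} = {a, b} := by
      ext x
      simp only [Set.image_insert_eq, Set.image_singleton, Equiv.swap_apply_left,
        Equiv.swap_apply_right]
      constructor <;> rintro (rfl | rfl) <;> simp
    rw [himg]
    have hmem : c {a, b} ∈ ({a, b} : Set A) := hc _ ⟨a, by simp⟩
    rcases hmem with h | h
    · rw [h, Equiv.swap_apply_left]; exact hne
    · rw [Set.mem_singleton_iff.mp h, Equiv.swap_apply_right]
      exact fun h' => hne h'.symm
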